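/- Let w_j = σ² λ₁ λ_j / (1 + σ² ‖λ‖₂²) with λ₁ ≠ 0 and σ > 0. Then w lies in the simplex Δ^J (that is, w_j ≥ 0 for all j and Σ_j w_j = 1) if and only if (1) sign(λ_j) = sign(λ₁) for all j with λ_j ≠ 0, and (2) Σ_j λ_j² − λ₁ Σ_j λ_j + 1/σ² = 0. -/
import Mathlib


/-- Simplex characterization: `w ∈ Δ^J` iff (1) every nonzero `λ_j` has the sign
of `λ₁` and (2) `Σ_j λ_j² − λ₁ Σ_j λ_j + 1/σ² = 0`. -/
theorem simplex_characterization (J : ℕ) (hJ : 1 ≤ J) (lam1 : ℝ) (h1 : lam1 ≠ 0)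
    (lam : Fin J → ℝ) (σ : ℝ) (hσ : 0 < σ) (w : Fin J → ℝ)
    (hw : ∀ j, w j = σ ^ 2 * lam1 * lam j / (1 + σ ^ 2 * ∑ i, (lam i) ^ 2)) :
    ((∀ j, 0 ≤ w j) ∧ ∑ j, w j = 1) ↔
      ((∀ j, lam j ≠ 0 → Real.sign (lam j) = Real.sign lam1) ∧
        (∑ j, (lam j) ^ 2) - lam1 * (∑ j, lam j) + 1 / σ ^ 2 = 0) := by
  have hσ2 : (0:ℝ) < σ ^ 2 := by positivity
  have hS2 : (0:ℝ) ≤ ∑ i, (lam i) ^ 2 := Finset.sum_nonneg fun i _ => sq_nonneg _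
  have hD : (0:ℝ) < 1 + σ ^ 2 * ∑ i, (lam i) ^ 2 := by nlinarith
  have hsumw : ∑ j, w j = σ ^ 2 * lam1 * (∑ j, lam j) / (1 + σ ^ 2 * ∑ i, (lam i) ^ 2) := by
    rw [Finset.mul_sum, Finset.sum_div]
    exact Finset.sum_congr rfl fun j _ => hw j
  constructor
  · rintro ⟨hpos, hsum⟩
    constructor
    · intro j hj
      have h := hpos j
      rw [hw j] at h
      have hnum : 0 ≤ σ ^ 2 * lam1 * lam j := by
        rcases div_nonneg_iff.mp h with ⟨h', _⟩ | ⟨_, h'⟩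
        · exact h'
        · linarith
      have hprod : 0 ≤ lam1 * lam j := by nlinarith
      rcases lt_or_gt_of_ne h1 with h1' | h1'
      · have hjn : lam j < 0 := by
          rcases lt_or_gt_of_ne hj with h | h
          · exact h
          · nlinarith
        rw [Real.sign_of_neg hjn, Real.sign_of_neg h1']
      · have hjp : 0 < lam j := by
          rcases lt_or_gt_of_ne hj with h | h
          · nlinarith
          · exact h
        rw [Real.sign_of_pos hjp, Real.sign_of_pos h1']
    · rw [hsumw, div_eq_one_iff_eq hD.ne'] at hsum
      field_simp
      nlinarith [hsum]
  · rintro ⟨hsign, heq⟩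
    have key : σ ^ 2 * lam1 * (∑ j, lam j) = 1 + σ ^ 2 * ∑ i, (lam i) ^ 2 := by
      have : σ ^ 2 * ((∑ j, (lam j) ^ 2) - lam1 * (∑ j, lam j) + 1 / σ ^ 2) = 0 := by
        rw [heq]; ring
      field_simp at this
      nlinarith [this]
    constructor
    · intro j
      rw [hw j]
      apply div_nonneg _ hD.le
      have hprod : 0 ≤ lam1 * lam j := by
        rcases eq_or_ne (lam j) 0 with h | h
        · simp [h]
        · have hs := hsign j h
          rcases lt_or_gt_of_ne h1 with h1' | h1'
          · rcases lt_or_gt_of_ne h with hh | hh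
            · nlinarith
            · rw [Real.sign_of_pos hh, Real.sign_of_neg h1'] at hs; norm_num at hs
          · rcases lt_or_gt_of_ne h with hh | hh
            · rw [Real.sign_of_neg hh, Real.sign_of_pos h1'] at hs; norm_num at hs
            · nlinarith
      nlinarith
    · rw [hsumw, div_eq_one_iff_eq hD.ne']
      exact key
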